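/- Let X be uniformly distributed on the open unit disc, r ∈ (0,1), and Y = r - Re(1/(r - X)). Then there exist absolute constants C₂ ≤ C₁ (independent of r and m) such that for all m ≥ 2, C₂ log m ≤ E[Y² · 1_{|Y| ≤ m}] ≤ C₁ log m. -/

import Mathlib

open Real Complex MeasureTheory Set

/-- The uniform probability measure on the open unit disc in `ℂ`. -/
noncomputable def unifDisc : Measure ℂ :=
  (volume (Metric.ball (0 : ℂ) 1))⁻¹ • volume.restrict (Metric.ball (0 : ℂ) 1)

lemma sq_lt_iff_abs (x : ℂ) (d : ℝ) (hd : 0 < d) :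
    ‖x‖ < d ↔ ‖x‖ ^ 2 < d ^ 2 := by
  constructor
  · intro h; exact pow_lt_pow_left₀ h (norm_nonneg x) two_ne_zero
  · intro h; exact lt_of_pow_lt_pow_left₀ 2 hd.le h

lemma core_iff (t a b : ℝ) (ht : 0 < t) :
    t < a / (a^2 + b^2) ↔ (a - 1/(2*t))^2 + b^2 < (1/(2*t))^2 := by
  have key : (a - 1/(2*t))^2 + b^2 - (1/(2*t))^2 = (t*(a^2+b^2) - a)/t := by
    field_simp; ring
  have h2 : ((a - 1/(2*t))^2 + b^2 < (1/(2*t))^2) ↔ t*(a^2+b^2) < a := by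
    rw [← sub_neg, key, div_lt_iff₀ ht, zero_mul, sub_neg]
  rw [h2]
  rcases eq_or_lt_of_le (by positivity : (0:ℝ) ≤ a^2 + b^2) with h | h
  · have ha : a = 0 := by nlinarith [sq_nonneg a, sq_nonneg b]
    have hb : b = 0 := by nlinarith [sq_nonneg a, sq_nonneg b]
    simp only [ha, hb]
    norm_num
    exact ht.le
  · rw [lt_div_iff₀ h, mul_comm]

lemma superlevel_eq (r t : ℝ) (ht : 0 < t) :
    {z : ℂ | t < (((r:ℂ) - z)⁻¹).re}
      = Metric.ball ((r - 1/(2*t) : ℝ) : ℂ) (1/(2*t)) := by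
  have hd : 0 < 1/(2*t) := by positivity
  ext z
  have h1 : (((r:ℂ) - z)⁻¹).re = ((r:ℂ) - z).re / (((r:ℂ)-z).re^2 + ((r:ℂ)-z).im^2) := by
    rw [Complex.inv_re, Complex.normSq_apply]; ring_nf
  have h2 : ‖(z - ((r - 1/(2*t) : ℝ) : ℂ))‖ ^ 2
      = (((r:ℂ)-z).re - 1/(2*t))^2 + ((r:ℂ)-z).im^2 := by
    rw [Complex.sq_norm, Complex.normSq_apply]
    simp [Complex.sub_re, Complex.sub_im]
    ring
  simp only [Set.mem_setOf_eq, Metric.mem_ball, Complex.dist_eq, h1,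
    core_iff _ _ _ ht, sq_lt_iff_abs _ _ hd, h2]

lemma sublevel_eq (r t : ℝ) (ht : 0 < t) :
    {z : ℂ | (((r:ℂ) - z)⁻¹).re < -t}
      = Metric.ball ((r + 1/(2*t) : ℝ) : ℂ) (1/(2*t)) := by
  have hd : 0 < 1/(2*t) := by positivity
  ext z
  have h1 : (((r:ℂ) - z)⁻¹).re < -t ↔ t < ((z - (r:ℂ))⁻¹).re := by
    rw [show z - (r:ℂ) = -((r:ℂ) - z) by ring, inv_neg, Complex.neg_re]
    constructor <;> intro <;> linarith
  have h2 : ((z - (r:ℂ))⁻¹).re = (z - (r:ℂ)).re / ((z-(r:ℂ)).re^2 + (z-(r:ℂ)).im^2) := by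
    rw [Complex.inv_re, Complex.normSq_apply]; ring_nf
  have h3 : ‖(z - ((r + 1/(2*t) : ℝ) : ℂ))‖ ^ 2
      = ((z - (r:ℂ)).re - 1/(2*t))^2 + (z-(r:ℂ)).im^2 := by
    rw [Complex.sq_norm, Complex.normSq_apply]
    simp [Complex.sub_re, Complex.sub_im]
    ring
  simp only [Set.mem_setOf_eq, h1, h2, core_iff _ _ _ ht, Metric.mem_ball,
    Complex.dist_eq, sq_lt_iff_abs _ _ hd, h3]

lemma vol_unit_ball : volume (Metric.ball (0:ℂ) 1) = (NNReal.pi : ENNReal) := by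
  simp [Complex.volume_ball]

lemma pi_ne_zero' : (NNReal.pi : ENNReal) ≠ 0 := by
  simp [NNReal.pi_ne_zero]

lemma pi_ne_top' : (NNReal.pi : ENNReal) ≠ ⊤ := ENNReal.coe_ne_top

lemma unifDisc_apply {S : Set ℂ} (hS : MeasurableSet S) :
    unifDisc S = (NNReal.pi : ENNReal)⁻¹ * volume (S ∩ Metric.ball (0:ℂ) 1) := by
  rw [unifDisc, Measure.smul_apply, Measure.restrict_apply hS, vol_unit_ball, smul_eq_mul]

lemma unifDisc_univ : unifDisc (Set.univ : Set ℂ) = 1 := by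
  rw [unifDisc_apply MeasurableSet.univ, Set.univ_inter, vol_unit_ball,
    ENNReal.inv_mul_cancel pi_ne_zero' pi_ne_top']

lemma unifDisc_le_one (S : Set ℂ) : unifDisc S ≤ 1 := by
  rw [← unifDisc_univ]; exact measure_mono (Set.subset_univ S)

lemma pi_cancel (x : ENNReal) :
    (NNReal.pi : ENNReal)⁻¹ * (x * (NNReal.pi : ENNReal)) = x := by
  rw [mul_comm x, ← mul_assoc, ENNReal.inv_mul_cancel pi_ne_zero' pi_ne_top', one_mul]

lemma unifDisc_ball_le {S : Set ℂ} (hS : MeasurableSet S) {c : ℂ} {d : ℝ}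
    (hd : 0 ≤ d) (h : S ⊆ Metric.ball c d) : unifDisc S ≤ ENNReal.ofReal (d^2) := by
  rw [unifDisc_apply hS]
  calc (NNReal.pi : ENNReal)⁻¹ * volume (S ∩ Metric.ball (0:ℂ) 1)
      ≤ (NNReal.pi : ENNReal)⁻¹ * volume (Metric.ball c d) := by
        gcongr; exact (Set.inter_subset_left).trans h
    _ = ENNReal.ofReal (d^2) := by
        rw [Complex.volume_ball, ← ENNReal.ofReal_pow hd, pi_cancel]

lemma unifDisc_ball_eq {c : ℂ} {d : ℝ} (hd : 0 ≤ d)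
    (h : Metric.ball c d ⊆ Metric.ball (0:ℂ) 1) :
    unifDisc (Metric.ball c d) = ENNReal.ofReal (d^2) := by
  rw [unifDisc_apply Metric.isOpen_ball.measurableSet, Set.inter_eq_left.mpr h,
    Complex.volume_ball, ← ENNReal.ofReal_pow hd, pi_cancel]

lemma measurable_f (r : ℝ) : Measurable fun z : ℂ => (((r:ℂ) - z)⁻¹).re :=
  Complex.measurable_re.comp ((measurable_const.sub measurable_id).inv)

lemma ball_subset_unit (r t : ℝ) (hr0 : 0 < r) (hr1 : r < 1) (ht : 1 ≤ t) :
    Metric.ball ((r - 1/(2*t) : ℝ) : ℂ) (1/(2*t)) ⊆ Metric.ball (0:ℂ) 1 := by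
  apply Metric.ball_subset_ball'
  have ht0 : 0 < t := lt_of_lt_of_le one_pos ht
  have h1 : 1/t ≤ 1 := by rw [div_le_one ht0]; exact ht
  have h2d : 2*(1/(2*t)) = 1/t := by ring
  have hd : 0 < 1/(2*t) := by positivity
  have hdist : dist ((r - 1/(2*t) : ℝ) : ℂ) 0 = |r - 1/(2*t)| := by
    rw [dist_zero_right, Complex.norm_real, Real.norm_eq_abs]
  rw [hdist]
  have habs : |r - 1/(2*t)| ≤ 1 - 1/(2*t) := by
    rw [abs_le]; constructor <;> [linarith; linarith]
  linarith

lemma measure_superlevel (r t : ℝ) (hr0 : 0 < r) (hr1 : r < 1) (ht : 1 ≤ t) :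
    unifDisc {z : ℂ | t < (((r:ℂ) - z)⁻¹).re} = ENNReal.ofReal (1/(4*t^2)) := by
  have ht0 : 0 < t := lt_of_lt_of_le one_pos ht
  rw [superlevel_eq r t ht0,
    unifDisc_ball_eq (by positivity) (ball_subset_unit r t hr0 hr1 ht)]
  congr 1; field_simp; ring

lemma measure_superlevel_le (r t : ℝ) (ht : 0 < t) :
    unifDisc {z : ℂ | t < (((r:ℂ) - z)⁻¹).re} ≤ ENNReal.ofReal (1/(4*t^2)) := by
  rw [superlevel_eq r t ht]
  have := unifDisc_ball_le Metric.isOpen_ball.measurableSet (by positivity : (0:ℝ) ≤ 1/(2*t))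
    (subset_rfl : Metric.ball ((r - 1/(2*t) : ℝ) : ℂ) (1/(2*t)) ⊆ _)
  convert this using 2
  field_simp; ring

lemma measure_sublevel_le (r t : ℝ) (ht : 0 < t) :
    unifDisc {z : ℂ | (((r:ℂ) - z)⁻¹).re < -t} ≤ ENNReal.ofReal (1/(4*t^2)) := by
  rw [sublevel_eq r t ht]
  have := unifDisc_ball_le Metric.isOpen_ball.measurableSet (by positivity : (0:ℝ) ≤ 1/(2*t))
    (subset_rfl : Metric.ball ((r + 1/(2*t) : ℝ) : ℂ) (1/(2*t)) ⊆ _)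
  convert this using 2
  field_simp; ring

lemma measure_shell (r : ℝ) (hr0 : 0 < r) (hr1 : r < 1) {a b : ℝ} (ha : 1 ≤ a) (hab : a ≤ b) :
    unifDisc {z : ℂ | a < (((r:ℂ) - z)⁻¹).re ∧ (((r:ℂ) - z)⁻¹).re ≤ b}
      = ENNReal.ofReal (1/(4*a^2) - 1/(4*b^2)) := by
  have hb : 1 ≤ b := ha.trans hab
  have hset : {z : ℂ | a < (((r:ℂ) - z)⁻¹).re ∧ (((r:ℂ) - z)⁻¹).re ≤ b}
      = {z : ℂ | a < (((r:ℂ) - z)⁻¹).re} \ {z : ℂ | b < (((r:ℂ) - z)⁻¹).re} := by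
    ext z; simp only [Set.mem_setOf_eq, Set.mem_diff, not_lt]
  have hmb : MeasurableSet {z : ℂ | b < (((r:ℂ) - z)⁻¹).re} :=
    measurableSet_lt measurable_const (measurable_f r)
  have hsub : {z : ℂ | b < (((r:ℂ) - z)⁻¹).re} ⊆ {z : ℂ | a < (((r:ℂ) - z)⁻¹).re} :=
    fun z hz => lt_of_le_of_lt hab hz
  rw [hset, measure_diff hsub hmb.nullMeasurableSet
    (by rw [measure_superlevel r b hr0 hr1 hb]; exact ENNReal.ofReal_ne_top),
    measure_superlevel r a hr0 hr1 ha, measure_superlevel r b hr0 hr1 hb,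
    ← ENNReal.ofReal_sub _ (by positivity)]

lemma layer_repr (r m : ℝ) :
    ∫ z in {z : ℂ | |r - (((r:ℂ) - z)⁻¹).re| ≤ m}, (r - (((r:ℂ) - z)⁻¹).re)^2 ∂unifDisc
    = (∫⁻ t in Ioi (0:ℝ),
        (unifDisc.restrict {z : ℂ | |r - (((r:ℂ) - z)⁻¹).re| ≤ m})
          {z : ℂ | t < |r - (((r:ℂ) - z)⁻¹).re|} * ENNReal.ofReal (2*t)).toReal := by
  set ν := unifDisc.restrict {z : ℂ | |r - (((r:ℂ) - z)⁻¹).re| ≤ m} with hν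
  have hg : Measurable fun z : ℂ => |r - (((r:ℂ) - z)⁻¹).re| :=
    (measurable_const.sub (measurable_f r)).abs
  have h1 : ∫ z in {z : ℂ | |r - (((r:ℂ) - z)⁻¹).re| ≤ m},
      (r - (((r:ℂ) - z)⁻¹).re)^2 ∂unifDisc
      = ∫ z, |r - (((r:ℂ) - z)⁻¹).re|^2 ∂ν := by
    rw [hν]; congr 1; ext z; exact (_root_.sq_abs _).symm
  have h2 : ∫ z, |r - (((r:ℂ) - z)⁻¹).re|^2 ∂ν
      = (∫⁻ z, ENNReal.ofReal (|r - (((r:ℂ) - z)⁻¹).re|^2) ∂ν).toReal := by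
    apply integral_eq_lintegral_of_nonneg_ae
    · exact Filter.Eventually.of_forall fun z => by positivity
    · exact ((hg.pow_const 2).aestronglyMeasurable)
  have key := lintegral_comp_eq_lintegral_meas_lt_mul ν
    (f := fun z : ℂ => |r - (((r:ℂ) - z)⁻¹).re|)
    (Filter.Eventually.of_forall fun z => abs_nonneg _) hg.aemeasurable
    (g := fun t => 2*t)
    (fun t _ => (continuous_const.mul continuous_id).intervalIntegrable _ _)
    ((ae_restrict_mem measurableSet_Ioi).mono fun t ht => by
      simp only [Set.mem_Ioi] at ht; show (0:ℝ) ≤ 2 * t; linarith)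
  have h3 : ∀ x : ℝ, (∫ s in (0:ℝ)..x, 2*s) = x^2 := by
    intro x
    rw [intervalIntegral.integral_const_mul, integral_id]
    ring
  simp_rw [h3] at key
  rw [h1, h2, key]

lemma upper_I (r m : ℝ) (hr0 : 0 < r) (hr1 : r < 1) (hm : 2 ≤ m) :
    (∫⁻ t in Ioi (0:ℝ),
        (unifDisc.restrict {z : ℂ | |r - (((r:ℂ) - z)⁻¹).re| ≤ m})
          {z : ℂ | t < |r - (((r:ℂ) - z)⁻¹).re|} * ENNReal.ofReal (2*t))
      ≤ ENNReal.ofReal (4 + 4*Real.log m) := by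
  set T := {z : ℂ | |r - (((r:ℂ) - z)⁻¹).re| ≤ m} with hT
  set ν := unifDisc.restrict T with hν
  set F := fun t : ℝ => ν {z : ℂ | t < |r - (((r:ℂ) - z)⁻¹).re|} * ENNReal.ofReal (2*t)
    with hF
  have hgm : Measurable fun z : ℂ => |r - (((r:ℂ) - z)⁻¹).re| :=
    (measurable_const.sub (measurable_f r)).abs
  have hm0 : (0:ℝ) ≤ m := by linarith
  -- split the domain
  have hsplit : Ioi (0:ℝ) = (Ioc 0 2 ∪ Ioc 2 m) ∪ Ioi m := by
    rw [Set.Ioc_union_Ioc_eq_Ioc (by norm_num : (0:ℝ) ≤ 2) hm,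
      Set.Ioc_union_Ioi_eq_Ioi hm0]
  have hdisj1 : Disjoint (Ioc (0:ℝ) 2) (Ioc 2 m) := by
    apply Set.disjoint_left.mpr
    intro x hx hx'
    exact absurd hx'.1 (not_lt.mpr hx.2)
  have hdisj2 : Disjoint (Ioc (0:ℝ) 2 ∪ Ioc 2 m) (Ioi m) := by
    apply Set.disjoint_left.mpr
    intro x hx hx'
    simp only [Set.mem_Ioc, Set.mem_Ioi, Set.mem_union] at hx hx'
    rcases hx with hx | hx <;> linarith
  -- measurability of superlevel sets of g
  have hmeasS : ∀ t : ℝ, MeasurableSet {z : ℂ | t < |r - (((r:ℂ) - z)⁻¹).re|} :=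
    fun t => measurableSet_lt measurable_const hgm
  -- tail piece vanishes
  have htail : ∫⁻ t in Ioi m, F t = 0 := by
    apply le_antisymm ?_ zero_le
    have hz : ∀ t ∈ Ioi m, F t ≤ (fun _ => (0:ENNReal)) t := by
      intro t ht
      simp only [Set.mem_Ioi] at ht
      have : {z : ℂ | t < |r - (((r:ℂ) - z)⁻¹).re|} ∩ T = ∅ := by
        apply Set.eq_empty_iff_forall_notMem.mpr
        intro z hz
        have h1 : t < |r - (((r:ℂ) - z)⁻¹).re| := hz.1
        have h2 : |r - (((r:ℂ) - z)⁻¹).re| ≤ m := hz.2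
        linarith
      rw [hF]
      simp only [hν, Measure.restrict_apply (hmeasS t), this, measure_empty, zero_mul, le_refl]
    calc ∫⁻ t in Ioi m, F t ≤ ∫⁻ _ in Ioi m, (0:ENNReal) :=
          setLIntegral_mono measurable_const hz
      _ = 0 := by simp
  -- first piece
  have hp1 : ∫⁻ t in Ioc (0:ℝ) 2, F t ≤ ENNReal.ofReal 4 := by
    have hb : ∀ t ∈ Ioc (0:ℝ) 2, F t ≤ (fun s => ENNReal.ofReal (2*s)) t := by
      intro t ht
      rw [hF]
      calc ν {z : ℂ | t < |r - (((r:ℂ) - z)⁻¹).re|} * ENNReal.ofReal (2*t)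
          ≤ 1 * ENNReal.ofReal (2*t) := by
            apply mul_le_mul_left
            refine le_trans ?_ (unifDisc_le_one T)
            rw [hν, Measure.restrict_apply (hmeasS t)]
            exact measure_mono Set.inter_subset_right
        _ = ENNReal.ofReal (2*t) := one_mul _
    calc ∫⁻ t in Ioc (0:ℝ) 2, F t ≤ ∫⁻ t in Ioc (0:ℝ) 2, ENNReal.ofReal (2*t) :=
          setLIntegral_mono (by fun_prop) hb
      _ = ENNReal.ofReal (∫ t in Ioc (0:ℝ) 2, 2*t) := by
          rw [← ofReal_integral_eq_lintegral_ofReal]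
          · exact ((continuous_const.mul continuous_id).integrableOn_Ioc)
          · exact (ae_restrict_mem measurableSet_Ioc).mono fun t ht => by
              simp only [Set.mem_Ioc] at ht
              show (0:ℝ) ≤ 2 * t
              linarith
      _ = ENNReal.ofReal 4 := by
          rw [← intervalIntegral.integral_of_le (by norm_num : (0:ℝ) ≤ 2),
            intervalIntegral.integral_const_mul, integral_id]
          norm_num
  -- second piece
  have hp2 : ∫⁻ t in Ioc (2:ℝ) m, F t ≤ ENNReal.ofReal (4 * Real.log m) := by
    have hb : ∀ t ∈ Ioc (2:ℝ) m, F t ≤ (fun s => ENNReal.ofReal (4/s)) t := by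
      intro t ht
      simp only [Set.mem_Ioc] at ht
      have ht0 : (0:ℝ) < t := by linarith [ht.1]
      have ht1 : (0:ℝ) < t - 1 := by linarith [ht.1]
      have hsub : {z : ℂ | t < |r - (((r:ℂ) - z)⁻¹).re|}
          ⊆ {z : ℂ | t - 1 < (((r:ℂ) - z)⁻¹).re} ∪ {z : ℂ | (((r:ℂ) - z)⁻¹).re < -(t-1)} := by
        intro z hz
        simp only [Set.mem_setOf_eq, Set.mem_union] at hz ⊢
        rcases abs_lt.not.mp (not_lt.mpr (le_of_lt hz)) with h
        push_neg at h
        rcases lt_or_ge (r - (((r:ℂ) - z)⁻¹).re) 0 with hc | hc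
        · left
          have : |r - (((r:ℂ) - z)⁻¹).re| = -(r - (((r:ℂ) - z)⁻¹).re) := abs_of_neg hc
          rw [this] at hz
          linarith
        · right
          have : |r - (((r:ℂ) - z)⁻¹).re| = r - (((r:ℂ) - z)⁻¹).re := abs_of_nonneg hc
          rw [this] at hz
          linarith
      have hmb : ν {z : ℂ | t < |r - (((r:ℂ) - z)⁻¹).re|}
          ≤ ENNReal.ofReal (2/t^2) := by
        rw [hν, Measure.restrict_apply (hmeasS t)]
        calc unifDisc ({z : ℂ | t < |r - (((r:ℂ) - z)⁻¹).re|} ∩ T)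
            ≤ unifDisc ({z : ℂ | t - 1 < (((r:ℂ) - z)⁻¹).re}
                ∪ {z : ℂ | (((r:ℂ) - z)⁻¹).re < -(t-1)}) :=
              measure_mono (Set.inter_subset_left.trans hsub)
          _ ≤ unifDisc {z : ℂ | t - 1 < (((r:ℂ) - z)⁻¹).re}
                + unifDisc {z : ℂ | (((r:ℂ) - z)⁻¹).re < -(t-1)} := measure_union_le _ _
          _ ≤ ENNReal.ofReal (1/(4*(t-1)^2)) + ENNReal.ofReal (1/(4*(t-1)^2)) :=
              add_le_add (measure_superlevel_le r (t-1) ht1) (measure_sublevel_le r (t-1) ht1)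
          _ = ENNReal.ofReal (1/(2*(t-1)^2)) := by
              rw [← ENNReal.ofReal_add (by positivity) (by positivity)]
              congr 1
              field_simp
              ring
          _ ≤ ENNReal.ofReal (2/t^2) := by
              apply ENNReal.ofReal_le_ofReal
              rw [div_le_div_iff₀ (by nlinarith : (0:ℝ) < 2*(t-1)^2) (by nlinarith : (0:ℝ) < t^2)]
              nlinarith
      rw [hF]
      calc ν {z : ℂ | t < |r - (((r:ℂ) - z)⁻¹).re|} * ENNReal.ofReal (2*t)
          ≤ ENNReal.ofReal (2/t^2) * ENNReal.ofReal (2*t) := mul_le_mul_left hmb _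
        _ = ENNReal.ofReal (2/t^2 * (2*t)) :=
            (ENNReal.ofReal_mul (by positivity)).symm
        _ = ENNReal.ofReal (4/t) := by
            congr 1
            field_simp
            ring
    calc ∫⁻ t in Ioc (2:ℝ) m, F t ≤ ∫⁻ t in Ioc (2:ℝ) m, ENNReal.ofReal (4/t) :=
          setLIntegral_mono (by fun_prop) hb
      _ = ENNReal.ofReal (∫ t in Ioc (2:ℝ) m, 4/t) := by
          rw [← ofReal_integral_eq_lintegral_ofReal]
          · apply (ContinuousOn.integrableOn_Icc ?_).mono_set Set.Ioc_subset_Icc_self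
            exact continuousOn_const.div continuousOn_id
              (fun x hx => ne_of_gt (lt_of_lt_of_le two_pos hx.1))
          · exact (ae_restrict_mem measurableSet_Ioc).mono fun t ht => by
              simp only [Set.mem_Ioc] at ht
              exact div_nonneg (by norm_num) (by linarith [ht.1])
      _ ≤ ENNReal.ofReal (4 * Real.log m) := by
          apply ENNReal.ofReal_le_ofReal
          have h2m : (2:ℝ) ≤ m := hm
          rw [← intervalIntegral.integral_of_le h2m]
          have : ∀ t : ℝ, 4/t = 4 * t⁻¹ := fun t => by ring
          simp_rw [this]
          rw [intervalIntegral.integral_const_mul, integral_inv (by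
            rw [Set.uIcc_of_le h2m]
            intro h
            have := h.1
            norm_num at this)]
          have hlog2 : 0 ≤ Real.log 2 := Real.log_nonneg (by norm_num)
          have : Real.log (m/2) = Real.log m - Real.log 2 :=
            Real.log_div (by linarith) (by norm_num)
          rw [this]
          nlinarith [Real.log_nonneg (by linarith : (1:ℝ) ≤ m)]
  -- assemble
  calc ∫⁻ t in Ioi (0:ℝ), F t
      = (∫⁻ t in Ioc (0:ℝ) 2, F t) + (∫⁻ t in Ioc 2 m, F t) + (∫⁻ t in Ioi m, F t) := by
        rw [hsplit, lintegral_union measurableSet_Ioi hdisj2,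
          lintegral_union measurableSet_Ioc hdisj1]
    _ ≤ ENNReal.ofReal 4 + ENNReal.ofReal (4 * Real.log m) + 0 := by
        exact add_le_add (add_le_add hp1 hp2) (le_of_eq htail)
    _ = ENNReal.ofReal (4 + 4 * Real.log m) := by
        rw [add_zero, ← ENNReal.ofReal_add (by norm_num)
          (mul_nonneg (by norm_num) (Real.log_nonneg (by linarith)))]

lemma lower_I (r m : ℝ) (hr0 : 0 < r) (hr1 : r < 1) (hm : 16 ≤ m) :
    ENNReal.ofReal ((1/18) * Real.log m)
      ≤ ∫⁻ t in Ioi (0:ℝ),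
        (unifDisc.restrict {z : ℂ | |r - (((r:ℂ) - z)⁻¹).re| ≤ m})
          {z : ℂ | t < |r - (((r:ℂ) - z)⁻¹).re|} * ENNReal.ofReal (2*t) := by
  set T := {z : ℂ | |r - (((r:ℂ) - z)⁻¹).re| ≤ m} with hT
  set ν := unifDisc.restrict T with hν
  have hgm : Measurable fun z : ℂ => |r - (((r:ℂ) - z)⁻¹).re| :=
    (measurable_const.sub (measurable_f r)).abs
  have hmeasS : ∀ t : ℝ, MeasurableSet {z : ℂ | t < |r - (((r:ℂ) - z)⁻¹).re|} :=
    fun t => measurableSet_lt measurable_const hgm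
  set J := Ioc (1:ℝ) (m/3 - 1) with hJ
  have hJsub : J ⊆ Ioi (0:ℝ) := fun x hx => lt_trans one_pos hx.1
  -- pointwise bound on J
  have hpt : ∀ t ∈ J,
      ENNReal.ofReal (1/(9*t))
        ≤ ν {z : ℂ | t < |r - (((r:ℂ) - z)⁻¹).re|} * ENNReal.ofReal (2*t) := by
    intro t ht
    simp only [hJ, Set.mem_Ioc] at ht
    have ht1 : (1:ℝ) < t := ht.1
    have ht3 : 3*(t+1) ≤ m := by linarith [ht.2]
    have ht0 : (0:ℝ) < t := by linarith
    have htp1 : (1:ℝ) ≤ t + 1 := by linarith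
    have htm : t + 1 ≤ m := by linarith
    -- shell is inside the relevant set
    have hsub : {z : ℂ | t + 1 < (((r:ℂ) - z)⁻¹).re ∧ (((r:ℂ) - z)⁻¹).re ≤ m}
        ⊆ {z : ℂ | t < |r - (((r:ℂ) - z)⁻¹).re|} ∩ T := by
      intro z hz
      simp only [Set.mem_setOf_eq] at hz
      have hf1 : t + 1 < (((r:ℂ) - z)⁻¹).re := hz.1
      have hf2 : (((r:ℂ) - z)⁻¹).re ≤ m := hz.2
      have habs : |r - (((r:ℂ) - z)⁻¹).re| = (((r:ℂ) - z)⁻¹).re - r := by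
        rw [abs_sub_comm]
        exact abs_of_pos (by linarith)
      constructor
      · simp only [Set.mem_setOf_eq, habs]; linarith
      · simp only [hT, Set.mem_setOf_eq, habs]; linarith
    have hmeasb : ENNReal.ofReal (1/(4*(t+1)^2) - 1/(4*m^2))
        ≤ ν {z : ℂ | t < |r - (((r:ℂ) - z)⁻¹).re|} := by
      rw [← measure_shell r hr0 hr1 htp1 htm, hν, Measure.restrict_apply (hmeasS t)]
      exact measure_mono hsub
    -- arithmetic
    have ha1 : (0:ℝ) < (t+1)^2 := by nlinarith
    have e1 : 1/(4*m^2) ≤ 1/(36*(t+1)^2) := by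
      rw [div_le_div_iff₀ (by nlinarith) (by nlinarith)]
      have h9 : 0 ≤ (m - 3*(t+1))*(m + 3*(t+1)) :=
        mul_nonneg (by linarith) (by linarith)
      nlinarith
    have e2 : 1/(36*(t+1)^2) = (1/9) * (1/(4*(t+1)^2)) := by
      field_simp
      ring
    have e3 : 1/(16*t^2) ≤ 1/(4*(t+1)^2) := by
      rw [div_le_div_iff₀ (by nlinarith) (by nlinarith)]
      nlinarith
    have e4 : 1/(18*t^2) = (8/9) * (1/(16*t^2)) := by
      field_simp
      ring
    have hA : 1/(18*t^2) ≤ 1/(4*(t+1)^2) - 1/(4*m^2) := by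
      have h5 : 1/(4*m^2) ≤ (1/9) * (1/(4*(t+1)^2)) := by rw [← e2]; exact e1
      rw [e4]
      linarith
    have hq : 1/(9*t) ≤ (1/(4*(t+1)^2) - 1/(4*m^2)) * (2*t) := by
      have h1 : 1/(18*t^2)*(2*t) ≤ (1/(4*(t+1)^2) - 1/(4*m^2))*(2*t) :=
        mul_le_mul_of_nonneg_right hA (by linarith)
      have h2 : 1/(18*t^2)*(2*t) = 1/(9*t) := by field_simp; ring
      linarith
    have hApos : (0:ℝ) ≤ 1/(4*(t+1)^2) - 1/(4*m^2) := by
      have : (0:ℝ) < 1/(18*t^2) := by positivity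
      linarith
    calc ENNReal.ofReal (1/(9*t))
        ≤ ENNReal.ofReal ((1/(4*(t+1)^2) - 1/(4*m^2)) * (2*t)) :=
          ENNReal.ofReal_le_ofReal hq
      _ = ENNReal.ofReal (1/(4*(t+1)^2) - 1/(4*m^2)) * ENNReal.ofReal (2*t) :=
          ENNReal.ofReal_mul hApos
      _ ≤ ν {z : ℂ | t < |r - (((r:ℂ) - z)⁻¹).re|} * ENNReal.ofReal (2*t) :=
          mul_le_mul_left hmeasb _
  -- lower bound via the indicator function
  have hstep1 : ∫⁻ t in J, ENNReal.ofReal (1/(9*t))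
      ≤ ∫⁻ t in Ioi (0:ℝ),
          ν {z : ℂ | t < |r - (((r:ℂ) - z)⁻¹).re|} * ENNReal.ofReal (2*t) := by
    have hind : ∫⁻ t in Ioi (0:ℝ),
        J.indicator (fun s => ENNReal.ofReal (1/(9*s))) t
        = ∫⁻ t in J, ENNReal.ofReal (1/(9*t)) := by
      rw [lintegral_indicator measurableSet_Ioc, Measure.restrict_restrict measurableSet_Ioc,
        Set.inter_eq_left.mpr hJsub]
    rw [← hind]
    apply lintegral_mono
    intro t
    by_cases htJ : t ∈ J
    · rw [Set.indicator_of_mem htJ]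
      exact hpt t htJ
    · rw [Set.indicator_of_notMem htJ]
      exact zero_le
  -- compute the explicit integral
  have hm3 : (1:ℝ) < m/3 - 1 := by linarith
  have hcomp : ∫⁻ t in J, ENNReal.ofReal (1/(9*t))
      = ENNReal.ofReal ((1/9) * Real.log (m/3-1)) := by
    rw [← ofReal_integral_eq_lintegral_ofReal]
    · congr 1
      rw [hJ, ← intervalIntegral.integral_of_le (le_of_lt hm3)]
      have : ∀ t : ℝ, 1/(9*t) = (1/9) * t⁻¹ := fun t => by ring
      simp_rw [this]
      rw [intervalIntegral.integral_const_mul, integral_inv (by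
        rw [Set.uIcc_of_le (le_of_lt hm3)]
        intro h
        have := h.1
        norm_num at this)]
      rw [div_one]
    · apply (ContinuousOn.integrableOn_Icc ?_).mono_set Set.Ioc_subset_Icc_self
      apply continuousOn_const.div
      · exact (continuousOn_const.mul continuousOn_id)
      · exact fun x hx => by
          have : (1:ℝ) ≤ x := hx.1
          positivity
    · exact (ae_restrict_mem measurableSet_Ioc).mono fun t ht => by
        have : (1:ℝ) < t := ht.1
        positivity
  -- conclude
  refine le_trans ?_ hstep1
  rw [hcomp]
  apply ENNReal.ofReal_le_ofReal
  have hlogm : Real.log 16 ≤ Real.log m := Real.log_le_log (by norm_num) hm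
  have h16 : Real.log 16 = 2 * Real.log 4 := by
    rw [show (16:ℝ) = 4^2 by norm_num, Real.log_pow]
    push_cast; ring
  have hm4 : m/4 ≤ m/3 - 1 := by linarith
  have hlog4 : Real.log (m/4) ≤ Real.log (m/3-1) :=
    Real.log_le_log (by linarith) hm4
  have hdiv : Real.log (m/4) = Real.log m - Real.log 4 :=
    Real.log_div (by linarith) (by norm_num)
  linarith

lemma integrableOn_T (r m : ℝ) (hm : 0 ≤ m) :
    IntegrableOn (fun z : ℂ => (r - (((r:ℂ) - z)⁻¹).re)^2)
      {z : ℂ | |r - (((r:ℂ) - z)⁻¹).re| ≤ m} unifDisc := by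
  have hgm : Measurable fun z : ℂ => |r - (((r:ℂ) - z)⁻¹).re| :=
    (measurable_const.sub (measurable_f r)).abs
  have hTmeas : MeasurableSet {z : ℂ | |r - (((r:ℂ) - z)⁻¹).re| ≤ m} :=
    measurableSet_le hgm measurable_const
  have hfin : unifDisc {z : ℂ | |r - (((r:ℂ) - z)⁻¹).re| ≤ m} ≠ ⊤ :=
    (lt_of_le_of_lt (unifDisc_le_one _) ENNReal.one_lt_top).ne
  apply Measure.integrableOn_of_bounded hfin
    (((measurable_const.sub (measurable_f r)).pow_const 2).aestronglyMeasurable) (M := m^2)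
  filter_upwards [ae_restrict_mem hTmeas] with z hz
  have hz' : |r - (((r:ℂ) - z)⁻¹).re| ≤ m := hz
  rw [Real.norm_eq_abs, _root_.abs_pow]
  exact pow_le_pow_left₀ (abs_nonneg _) hz' 2

lemma base_lower (r m : ℝ) (hr0 : 0 < r) (hr1 : r < 1) (hm : 2 ≤ m) :
    7/576 ≤ ∫ z in {z : ℂ | |r - (((r:ℂ) - z)⁻¹).re| ≤ m},
      (r - (((r:ℂ) - z)⁻¹).re)^2 ∂unifDisc := by
  set A := {z : ℂ | 3/2 < (((r:ℂ) - z)⁻¹).re ∧ (((r:ℂ) - z)⁻¹).re ≤ 2} with hA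
  have hAmeas : MeasurableSet A :=
    (measurableSet_lt measurable_const (measurable_f r)).inter
      (measurableSet_le (measurable_f r) measurable_const)
  have hAsub : A ⊆ {z : ℂ | |r - (((r:ℂ) - z)⁻¹).re| ≤ m} := by
    intro z hz
    simp only [hA, Set.mem_setOf_eq] at hz ⊢
    have habs : |r - (((r:ℂ) - z)⁻¹).re| = (((r:ℂ) - z)⁻¹).re - r := by
      rw [abs_sub_comm]; exact abs_of_pos (by linarith [hz.1])
    rw [habs]; linarith [hz.2]
  have hμA : unifDisc A = ENNReal.ofReal (7/144) := by
    rw [hA, measure_shell r hr0 hr1 (by norm_num : (1:ℝ) ≤ 3/2) (by norm_num : (3:ℝ)/2 ≤ 2)]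
    norm_num
  have hint := integrableOn_T r m (by linarith)
  have h1 : ∫ z in A, (r - (((r:ℂ) - z)⁻¹).re)^2 ∂unifDisc
      ≤ ∫ z in {z : ℂ | |r - (((r:ℂ) - z)⁻¹).re| ≤ m},
          (r - (((r:ℂ) - z)⁻¹).re)^2 ∂unifDisc := by
    apply setIntegral_mono_set hint
    · exact Filter.Eventually.of_forall fun z => sq_nonneg _
    · exact Filter.Eventually.of_forall hAsub
  have h2 : (1/4) * (unifDisc A).toReal ≤ ∫ z in A, (r - (((r:ℂ) - z)⁻¹).re)^2 ∂unifDisc := by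
    rw [mul_comm, ← smul_eq_mul]
    apply setIntegral_ge_of_const_le hAmeas
    · rw [hμA]; exact ENNReal.ofReal_ne_top
    · intro z hz
      simp only [hA, Set.mem_setOf_eq] at hz
      nlinarith [hz.1]
    · exact hint.mono_set hAsub
  rw [hμA, ENNReal.toReal_ofReal (by norm_num)] at h2
  linarith

/-- For `X` uniform on the unit disc and `Y = r - Re(1/(r - X))` with `r ∈ (0,1)`, there are
absolute constants `0 < C₂ ≤ C₁` such that for all `m ≥ 2`,
`C₂ log m ≤ E[Y² 1_{|Y| ≤ m}] ≤ C₁ log m`. -/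
theorem truncated_second_moment_of_Y :
    ∃ C₁ C₂ : ℝ, 0 < C₂ ∧ C₂ ≤ C₁ ∧
      ∀ r : ℝ, 0 < r → r < 1 → ∀ m : ℝ, 2 ≤ m →
        C₂ * Real.log m ≤
          (∫ z in {z : ℂ | |r - (((r : ℂ) - z)⁻¹).re| ≤ m},
              (r - (((r : ℂ) - z)⁻¹).re) ^ 2 ∂unifDisc) ∧
        (∫ z in {z : ℂ | |r - (((r : ℂ) - z)⁻¹).re| ≤ m},
              (r - (((r : ℂ) - z)⁻¹).re) ^ 2 ∂unifDisc) ≤ C₁ * Real.log m := by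
  refine ⟨10, 1/256, by norm_num, by norm_num, ?_⟩
  intro r hr0 hr1 m hm
  have hE := layer_repr r m
  have hIup := upper_I r m hr0 hr1 hm
  have hIne : (∫⁻ t in Set.Ioi (0:ℝ),
      (unifDisc.restrict {z : ℂ | |r - (((r:ℂ) - z)⁻¹).re| ≤ m})
        {z : ℂ | t < |r - (((r:ℂ) - z)⁻¹).re|} * ENNReal.ofReal (2*t)) ≠ ⊤ :=
    ne_top_of_le_ne_top ENNReal.ofReal_ne_top hIup
  have hlog2 : Real.log 2 ≤ Real.log m := Real.log_le_log (by norm_num) hm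
  have hl2gt : (0.6931471803:ℝ) < Real.log 2 := Real.log_two_gt_d9
  have hlogm_nonneg : (0:ℝ) ≤ Real.log m := by linarith
  constructor
  · rcases le_or_gt 16 m with h16 | h16
    · have hlow := lower_I r m hr0 hr1 h16
      have h2 := (ENNReal.ofReal_le_iff_le_toReal hIne).mp hlow
      rw [hE]
      linarith
    · have hbase := base_lower r m hr0 hr1 hm
      have hlm16 : Real.log m ≤ Real.log 16 := Real.log_le_log (by linarith) h16.le
      have h16eq : Real.log 16 = 4 * Real.log 2 := by
        rw [show (16:ℝ) = 2^4 by norm_num, Real.log_pow]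
        push_cast; ring
      have hl2lt : Real.log 2 < 0.6931471808 := Real.log_two_lt_d9
      linarith
  · rw [hE]
    have h3 := ENNReal.toReal_le_of_le_ofReal
      (by linarith : (0:ℝ) ≤ 4 + 4 * Real.log m) hIup
    linarith
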